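/- Define g(x,y,z) = (2−2y−z)·ln(√(1−α)/(1+Cα)) + (2x+z)·ln(α√(C(1+C))/√(1−α)) − y·ln(1+Cα) + ((1−y)/2)·ln(1−y) + ((1−z)/2)·ln(1−z) + ((1−y−z)/2)·ln(1−y−z) − x·ln x − (x+z)·ln(x+z) − (1−x−z)·ln(1−x−z) − (1−x−y−z)·ln(1−x−y−z), for parameters 0 < α < 1, C > 0. Then at the point x₀ = Cα/(1+Cα), y₀ = 1/(1+C), z₀ = 0, we have g(x₀,y₀,z₀) = 0. -/

import Mathlib

open Real

theorem g_vanishes_at_critical_point (α C : ℝ) (hα0 : 0 < α) (hα1 : α < 1)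
    (hC : 0 < C) :
    let g : ℝ → ℝ → ℝ → ℝ := fun x y z =>
      (2 - 2*y - z) * Real.log (Real.sqrt (1-α) / (1+C*α))
      + (2*x + z) * Real.log (α * Real.sqrt (C*(1+C)) / Real.sqrt (1-α))
      - y * Real.log (1+C*α)
      + ((1-y)/2) * Real.log (1-y) + ((1-z)/2) * Real.log (1-z)
      + ((1-y-z)/2) * Real.log (1-y-z)
      - x * Real.log x - (x+z) * Real.log (x+z)
      - (1-x-z) * Real.log (1-x-z)
      - (1-x-y-z) * Real.log (1-x-y-z)
    g (C*α/(1+C*α)) (1/(1+C)) 0 = 0 := by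
  intro g
  have h1 : (0:ℝ) < 1 - α := by linarith
  have h2 : (0:ℝ) < 1 + C*α := by nlinarith
  have h3 : (0:ℝ) < 1 + C := by linarith
  have e1 : 1 - C*α/(1+C*α) = 1/(1+C*α) := by field_simp; ring
  have e2 : 1 - 1/(1+C) = C/(1+C) := by field_simp; ring
  have e3 : 1/(1+C*α) - 1/(1+C) = C*(1-α)/((1+C*α)*(1+C)) := by
    field_simp; ring
  have l1 : Real.log (Real.sqrt (1-α) / (1+C*α))
      = (1/2) * Real.log (1-α) - Real.log (1+C*α) := by
    rw [Real.log_div (by positivity) (by positivity), Real.log_sqrt h1.le]; ring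
  have l2 : Real.log (α * Real.sqrt (C*(1+C)) / Real.sqrt (1-α))
      = Real.log α + (1/2) * Real.log C + (1/2) * Real.log (1+C)
        - (1/2) * Real.log (1-α) := by
    rw [Real.log_div (by positivity) (by positivity),
      Real.log_mul (by positivity) (by positivity),
      Real.log_sqrt (by positivity), Real.log_sqrt h1.le,
      Real.log_mul (by positivity) (by positivity)]
    ring
  have l3 : Real.log (C*α/(1+C*α)) = Real.log C + Real.log α - Real.log (1+C*α) := by
    rw [Real.log_div (by positivity) (by positivity),
      Real.log_mul (by positivity) (by positivity)]
  have l4 : Real.log (1/(1+C*α)) = - Real.log (1+C*α) := by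
    rw [Real.log_div (by norm_num) (by positivity)]; simp
  have l5 : Real.log (C/(1+C)) = Real.log C - Real.log (1+C) := by
    rw [Real.log_div (by positivity) (by positivity)]
  have l6 : Real.log (C*(1-α)/((1+C*α)*(1+C)))
      = Real.log C + Real.log (1-α) - Real.log (1+C*α) - Real.log (1+C) := by
    rw [Real.log_div (by positivity) (by positivity),
      Real.log_mul (by positivity) (by positivity),
      Real.log_mul (by positivity) (by positivity)]
    ring
  show g (C*α/(1+C*α)) (1/(1+C)) 0 = 0
  simp only [g]
  rw [e1, e2]
  norm_num
  rw [show ((1+C*α)⁻¹ - (1+C)⁻¹ : ℝ) = C*(1-α)/((1+C*α)*(1+C)) by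
    field_simp; ring]
  rw [l1, l2, l3, l5, l6]
  have hq : (1+C*α) ≠ 0 := h2.ne'
  have hp : (1+C) ≠ 0 := h3.ne'
  field_simp
  ring
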